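/- (Saddle-point characterization of TV/L1 solutions.) Let V be the space of real m×n matrices and W the space of real p×q matrices, both with the Frobenius inner product. Let H : V → V and L : V → W be linear maps, B ∈ V, F(R) = ‖R − B‖_{1,1} = Σ_{i,j}|R_{ij} − B_{ij}| for R ∈ V, and let G : W → ℝ be convex. Fix β > 0, ρ > 0 and define L_{β,ρ}(X,R,Y,Z,W') = F(R) + G(Y) + (β/2)‖L(X) − Y‖_F² + ⟨L(X) − Y, Z⟩_F + (ρ/2)‖H(X) − R‖_F² + ⟨H(X) − R, W'⟩_F. Then X* minimizes X ↦ F(H(X)) + G(L(X)) over V if and only if there exist R* ∈ V, Y* ∈ W, Z* ∈ W and W'* ∈ V such that (X*,R*,Y*,Z*,W'*) is a saddle point of L_{β,ρ}, i.e. L_{β,ρ}(X*,R*,Y*,Z,W') ≤ L_{β,ρ}(X*,R*,Y*,Z*,W'*) ≤ L_{β,ρ}(X,R,Y,Z*,W'*) for all X, R ∈ V, Y, Z ∈ W, W' ∈ V. -/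

import Mathlib

open Matrix

/-- Frobenius inner product on real matrices. -/
noncomputable def fip {m n : ℕ} (A B : Matrix (Fin m) (Fin n) ℝ) : ℝ :=
  (Aᵀ * B).trace

/-- Frobenius norm on real matrices. -/
noncomputable def fnorm {m n : ℕ} (A : Matrix (Fin m) (Fin n) ℝ) : ℝ :=
  Real.sqrt (fip A A)

/-- The augmented Lagrangian `L_{β,ρ}(X,R,Y,Z,W')` for the TV/L1 model. -/
noncomputable def lag5 {m n p q : ℕ}
    (H : Matrix (Fin m) (Fin n) ℝ →ₗ[ℝ] Matrix (Fin m) (Fin n) ℝ)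
    (L : Matrix (Fin m) (Fin n) ℝ →ₗ[ℝ] Matrix (Fin p) (Fin q) ℝ)
    (F : Matrix (Fin m) (Fin n) ℝ → ℝ) (G : Matrix (Fin p) (Fin q) ℝ → ℝ)
    (β ρ : ℝ)
    (X R : Matrix (Fin m) (Fin n) ℝ) (Y Z : Matrix (Fin p) (Fin q) ℝ)
    (W' : Matrix (Fin m) (Fin n) ℝ) : ℝ :=
  F R + G Y + β / 2 * (fnorm (L X - Y)) ^ 2 + fip (L X - Y) Z
    + ρ / 2 * (fnorm (H X - R)) ^ 2 + fip (H X - R) W'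

/-- Saddle point of the five-variable augmented Lagrangian. -/
def IsSaddle5 {m n p q : ℕ}
    (Φ : Matrix (Fin m) (Fin n) ℝ → Matrix (Fin m) (Fin n) ℝ →
      Matrix (Fin p) (Fin q) ℝ → Matrix (Fin p) (Fin q) ℝ →
      Matrix (Fin m) (Fin n) ℝ → ℝ)
    (Xs Rs : Matrix (Fin m) (Fin n) ℝ) (Ys Zs : Matrix (Fin p) (Fin q) ℝ)
    (Ws : Matrix (Fin m) (Fin n) ℝ) : Prop :=
  ∀ X R Y Z W', Φ Xs Rs Ys Z W' ≤ Φ Xs Rs Ys Zs Ws ∧ Φ Xs Rs Ys Zs Ws ≤ Φ X R Y Zs Ws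

namespace Stmt12Aux

variable {m n : ℕ}

lemma fip_eq (A B : Matrix (Fin m) (Fin n) ℝ) : fip A B = ∑ i, ∑ j, A i j * B i j := by
  rw [fip, Matrix.trace]
  simp only [Matrix.diag, Matrix.mul_apply, Matrix.transpose_apply]
  exact Finset.sum_comm

lemma fip_self_nonneg (A : Matrix (Fin m) (Fin n) ℝ) : 0 ≤ fip A A := by
  rw [fip_eq]
  exact Finset.sum_nonneg fun i _ => Finset.sum_nonneg fun j _ => mul_self_nonneg _

lemma fnorm_sq (A : Matrix (Fin m) (Fin n) ℝ) : fnorm A ^ 2 = fip A A :=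
  Real.sq_sqrt (fip_self_nonneg A)

lemma fip_zero_left (B : Matrix (Fin m) (Fin n) ℝ) : fip 0 B = 0 := by
  simp [fip_eq]

lemma fnorm_zero : fnorm (0 : Matrix (Fin m) (Fin n) ℝ) = 0 := by
  simp [fnorm, fip_zero_left]

lemma fip_smul_right (A : Matrix (Fin m) (Fin n) ℝ) (r : ℝ) (B : Matrix (Fin m) (Fin n) ℝ) :
    fip A (r • B) = r * fip A B := by
  simp only [fip_eq, Matrix.smul_apply, smul_eq_mul, Finset.mul_sum]
  exact Finset.sum_congr rfl fun i _ => Finset.sum_congr rfl fun j _ => by ring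

lemma eq_zero_of_fip_self {A : Matrix (Fin m) (Fin n) ℝ} (h : fip A A = 0) : A = 0 := by
  rw [fip_eq] at h
  funext i j
  have h1 := (Finset.sum_eq_zero_iff_of_nonneg (fun i _ =>
    Finset.sum_nonneg fun j _ => mul_self_nonneg (A i j))).1 h i (Finset.mem_univ i)
  have h2 := (Finset.sum_eq_zero_iff_of_nonneg (fun j _ =>
    mul_self_nonneg (A i j))).1 h1 j (Finset.mem_univ j)
  have := mul_self_eq_zero.1 h2
  simpa using this

lemma fip_combo {lam mu : ℝ} (hl : 0 ≤ lam) (hm : 0 ≤ mu) (hs : lam + mu = 1)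
    (A B : Matrix (Fin m) (Fin n) ℝ) :
    fip (lam • A + mu • B) (lam • A + mu • B) ≤ lam * fip A A + mu * fip B B := by
  simp only [fip_eq, Finset.mul_sum]
  rw [← Finset.sum_add_distrib]
  refine Finset.sum_le_sum fun i _ => ?_
  rw [← Finset.sum_add_distrib]
  refine Finset.sum_le_sum fun j _ => ?_
  simp only [Matrix.add_apply, Matrix.smul_apply, smul_eq_mul]
  nlinarith [mul_nonneg (mul_nonneg hl hm) (sq_nonneg (A i j - B i j))]

lemma F_combo (B : Matrix (Fin m) (Fin n) ℝ) (F : Matrix (Fin m) (Fin n) ℝ → ℝ)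
    (hFdef : ∀ R, F R = ∑ i, ∑ j, |R i j - B i j|)
    {lam mu : ℝ} (hl : 0 ≤ lam) (hm : 0 ≤ mu) (hs : lam + mu = 1)
    (A1 A2 : Matrix (Fin m) (Fin n) ℝ) :
    F (lam • A1 + mu • A2) ≤ lam * F A1 + mu * F A2 := by
  rw [hFdef, hFdef, hFdef]
  simp only [Finset.mul_sum]
  rw [← Finset.sum_add_distrib]
  refine Finset.sum_le_sum fun i _ => ?_
  rw [← Finset.sum_add_distrib]
  refine Finset.sum_le_sum fun j _ => ?_
  simp only [Matrix.add_apply, Matrix.smul_apply, smul_eq_mul]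
  have key : lam * A1 i j + mu * A2 i j - B i j
      = lam * (A1 i j - B i j) + mu * (A2 i j - B i j) := by
    linear_combination (B i j) * hs
  rw [key]
  calc |lam * (A1 i j - B i j) + mu * (A2 i j - B i j)|
      ≤ |lam * (A1 i j - B i j)| + |mu * (A2 i j - B i j)| := abs_add_le _ _
    _ = lam * |A1 i j - B i j| + mu * |A2 i j - B i j| := by
        rw [abs_mul, abs_mul, abs_of_nonneg hl, abs_of_nonneg hm]

lemma combo_lt {a b a' b' lam mu : ℝ} (h1 : a < a') (h2 : b < b')
    (hl : 0 ≤ lam) (hm : 0 ≤ mu) (hs : lam + mu = 1) :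
    lam * a + mu * b < lam * a' + mu * b' := by
  rcases hl.eq_or_lt with h | h
  · have hmu : mu = 1 := by linarith
    rw [← h, hmu]; simpa using h2
  · exact add_lt_add_of_lt_of_le ((mul_lt_mul_iff_right₀ h).2 h1)
      (mul_le_mul_of_nonneg_left h2.le hm)

lemma div_step {u Ψ c κ : ℝ} (hκ : κ < 0) (h : u + Ψ * κ ≤ c * κ) : c ≤ Ψ + κ⁻¹ * u := by
  have h3 : c - Ψ ≤ u / κ := by
    rw [le_div_iff_of_neg hκ]
    nlinarith [h]
  rw [inv_mul_eq_div]
  linarith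

section Top

attribute [local instance] Matrix.normedAddCommGroup Matrix.normedSpace

lemma continuous_entry (i : Fin m) (j : Fin n) :
    Continuous fun A : Matrix (Fin m) (Fin n) ℝ => A i j :=
  (continuous_apply j).comp (continuous_apply i)

lemma continuous_fnorm : Continuous fun A : Matrix (Fin m) (Fin n) ℝ => fnorm A := by
  have h : Continuous fun A : Matrix (Fin m) (Fin n) ℝ => fip A A := by
    have e : (fun A : Matrix (Fin m) (Fin n) ℝ => fip A A)
        = fun A => ∑ i, ∑ j, A i j * A i j := by
      funext A; exact fip_eq A A
    rw [e]
    exact continuous_finset_sum _ fun i _ => continuous_finset_sum _ fun j _ =>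
      (continuous_entry i j).mul (continuous_entry i j)
  exact Real.continuous_sqrt.comp h

lemma clm_repr (g : Matrix (Fin m) (Fin n) ℝ →L[ℝ] ℝ) (a : Matrix (Fin m) (Fin n) ℝ) :
    g a = fip a (Matrix.of fun i j => g (Matrix.single i j 1)) := by
  conv_lhs => rw [Matrix.matrix_eq_sum_single a]
  rw [map_sum, fip_eq]
  refine Finset.sum_congr rfl fun i _ => ?_
  rw [map_sum]
  refine Finset.sum_congr rfl fun j _ => ?_
  have h : Matrix.single i j (a i j) = a i j • Matrix.single i j (1:ℝ) := by
    rw [Matrix.smul_single]; simp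
  rw [h, g.map_smul, smul_eq_mul, Matrix.of_apply]

lemma forward {m n p q : ℕ}
    (H : Matrix (Fin m) (Fin n) ℝ →ₗ[ℝ] Matrix (Fin m) (Fin n) ℝ)
    (L : Matrix (Fin m) (Fin n) ℝ →ₗ[ℝ] Matrix (Fin p) (Fin q) ℝ)
    (B : Matrix (Fin m) (Fin n) ℝ)
    (F : Matrix (Fin m) (Fin n) ℝ → ℝ)
    (hFdef : ∀ R, F R = ∑ i, ∑ j, |R i j - B i j|)
    (G : Matrix (Fin p) (Fin q) ℝ → ℝ) (hG : ConvexOn ℝ Set.univ G)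
    (β ρ : ℝ) (hβ : 0 < β) (hρ : 0 < ρ)
    (Xs : Matrix (Fin m) (Fin n) ℝ)
    (hmin : ∀ X, F (H Xs) + G (L Xs) ≤ F (H X) + G (L X)) :
    ∃ (Rs : Matrix (Fin m) (Fin n) ℝ) (Ys Zs : Matrix (Fin p) (Fin q) ℝ)
      (Ws : Matrix (Fin m) (Fin n) ℝ),
      IsSaddle5 (lag5 H L F G β ρ) Xs Rs Ys Zs Ws := by
  classical
  -- continuity facts
  have hGc : Continuous G := by
    rw [← continuousOn_univ]
    exact ConvexOn.continuousOn isOpen_univ hG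
  have hFc : Continuous F := by
    have e : F = fun R : (Matrix (Fin m) (Fin n) ℝ) => ∑ i, ∑ j, |R i j - B i j| := funext hFdef
    rw [e]
    exact continuous_finset_sum _ fun i _ => continuous_finset_sum _ fun j _ =>
      ((continuous_entry i j).sub continuous_const).abs
  -- the separating open convex set
  set S : Set ((Matrix (Fin p) (Fin q) ℝ) × (Matrix (Fin m) (Fin n) ℝ) × ℝ) := ⋃ X : (Matrix (Fin m) (Fin n) ℝ), {v | F (H X - v.2.1) + G (L X - v.1)
      + β / 2 * (fnorm v.1) ^ 2 + ρ / 2 * (fnorm v.2.1) ^ 2 < v.2.2} with hSdef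
  have hopen : IsOpen S := by
    refine isOpen_iUnion fun X => ?_
    exact isOpen_lt
      ((((hFc.comp (continuous_const.sub (continuous_fst.comp continuous_snd))).add
        (hGc.comp (continuous_const.sub continuous_fst))).add
        (continuous_const.mul ((continuous_fnorm.comp continuous_fst).pow 2))).add
        (continuous_const.mul
          ((continuous_fnorm.comp (continuous_fst.comp continuous_snd)).pow 2)))
      (continuous_snd.comp continuous_snd)
  have hconv : Convex ℝ S := by
    rintro v hv w hw lam mu hl hm hs
    rw [Set.mem_iUnion] at hv hw
    obtain ⟨Xv, hXv⟩ := hv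
    obtain ⟨Xw, hXw⟩ := hw
    rw [Set.mem_setOf_eq] at hXv hXw
    rw [hSdef, Set.mem_iUnion]
    refine ⟨lam • Xv + mu • Xw, ?_⟩
    rw [Set.mem_setOf_eq]
    have e1 : (lam • v + mu • w).1 = lam • v.1 + mu • w.1 := rfl
    have e2 : (lam • v + mu • w).2.1 = lam • v.2.1 + mu • w.2.1 := rfl
    have e3 : (lam • v + mu • w).2.2 = lam * v.2.2 + mu * w.2.2 := rfl
    rw [e1, e2, e3]
    have hH : H (lam • Xv + mu • Xw) - (lam • v.2.1 + mu • w.2.1)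
        = lam • (H Xv - v.2.1) + mu • (H Xw - w.2.1) := by
      rw [map_add, LinearMap.map_smul, LinearMap.map_smul, smul_sub, smul_sub]
      abel
    have hL : L (lam • Xv + mu • Xw) - (lam • v.1 + mu • w.1)
        = lam • (L Xv - v.1) + mu • (L Xw - w.1) := by
      rw [map_add, LinearMap.map_smul, LinearMap.map_smul, smul_sub, smul_sub]
      abel
    rw [hH, hL]
    have bF := F_combo B F hFdef hl hm hs (H Xv - v.2.1) (H Xw - w.2.1)
    have bG : G (lam • (L Xv - v.1) + mu • (L Xw - w.1))
        ≤ lam * G (L Xv - v.1) + mu * G (L Xw - w.1) := by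
      simpa [smul_eq_mul] using hG.2 (Set.mem_univ (L Xv - v.1)) (Set.mem_univ (L Xw - w.1)) hl hm hs
    have bq1 : (fnorm (lam • v.1 + mu • w.1)) ^ 2
        ≤ lam * (fnorm v.1) ^ 2 + mu * (fnorm w.1) ^ 2 := by
      rw [fnorm_sq, fnorm_sq, fnorm_sq]
      exact fip_combo hl hm hs _ _
    have bq2 : (fnorm (lam • v.2.1 + mu • w.2.1)) ^ 2
        ≤ lam * (fnorm v.2.1) ^ 2 + mu * (fnorm w.2.1) ^ 2 := by
      rw [fnorm_sq, fnorm_sq, fnorm_sq]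
      exact fip_combo hl hm hs _ _
    have hβ2 : (0:ℝ) ≤ β / 2 := by linarith
    have hρ2 : (0:ℝ) ≤ ρ / 2 := by linarith
    have k1 := mul_le_mul_of_nonneg_left bq1 hβ2
    have k2 := mul_le_mul_of_nonneg_left bq2 hρ2
    have final := combo_lt hXv hXw hl hm hs
    calc F (lam • (H Xv - v.2.1) + mu • (H Xw - w.2.1))
          + G (lam • (L Xv - v.1) + mu • (L Xw - w.1))
          + β / 2 * (fnorm (lam • v.1 + mu • w.1)) ^ 2
          + ρ / 2 * (fnorm (lam • v.2.1 + mu • w.2.1)) ^ 2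
        ≤ (lam * F (H Xv - v.2.1) + mu * F (H Xw - w.2.1))
          + (lam * G (L Xv - v.1) + mu * G (L Xw - w.1))
          + (β / 2 * (lam * (fnorm v.1) ^ 2 + mu * (fnorm w.1) ^ 2))
          + (ρ / 2 * (lam * (fnorm v.2.1) ^ 2 + mu * (fnorm w.2.1) ^ 2)) := by linarith
      _ = lam * (F (H Xv - v.2.1) + G (L Xv - v.1) + β / 2 * (fnorm v.1) ^ 2
            + ρ / 2 * (fnorm v.2.1) ^ 2)
          + mu * (F (H Xw - w.2.1) + G (L Xw - w.1) + β / 2 * (fnorm w.1) ^ 2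
            + ρ / 2 * (fnorm w.2.1) ^ 2) := by ring
      _ < lam * v.2.2 + mu * w.2.2 := final
  -- membership lemma
  have hmem : ∀ (X R : (Matrix (Fin m) (Fin n) ℝ)) (Y : (Matrix (Fin p) (Fin q) ℝ)) (t : ℝ),
      F R + G Y + β / 2 * (fnorm (L X - Y)) ^ 2 + ρ / 2 * (fnorm (H X - R)) ^ 2 < t →
      ((L X - Y, H X - R, t) : (Matrix (Fin p) (Fin q) ℝ) × (Matrix (Fin m) (Fin n) ℝ) × ℝ) ∈ S := by
    intro X R Y t ht
    rw [hSdef, Set.mem_iUnion]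
    refine ⟨X, ?_⟩
    rw [Set.mem_setOf_eq]
    simpa [sub_sub_cancel] using ht
  -- the point to separate
  have hnot : ((0, 0, F (H Xs) + G (L Xs)) : (Matrix (Fin p) (Fin q) ℝ) × (Matrix (Fin m) (Fin n) ℝ) × ℝ) ∉ S := by
    rw [hSdef, Set.mem_iUnion]
    rintro ⟨X, hX⟩
    rw [Set.mem_setOf_eq] at hX
    simp only [sub_zero, fnorm_zero] at hX
    have := hmin X
    nlinarith [hX]
  obtain ⟨f, hf⟩ := geometric_hahn_banach_open_point hconv hopen hnot
  -- decompose f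
  let g1 : (Matrix (Fin p) (Fin q) ℝ) →L[ℝ] ℝ := f.comp (ContinuousLinearMap.inl ℝ (Matrix (Fin p) (Fin q) ℝ) ((Matrix (Fin m) (Fin n) ℝ) × ℝ))
  let g2 : (Matrix (Fin m) (Fin n) ℝ) →L[ℝ] ℝ := f.comp ((ContinuousLinearMap.inr ℝ (Matrix (Fin p) (Fin q) ℝ) ((Matrix (Fin m) (Fin n) ℝ) × ℝ)).comp
    (ContinuousLinearMap.inl ℝ (Matrix (Fin m) (Fin n) ℝ) ℝ))
  have hg1 : ∀ aa : (Matrix (Fin p) (Fin q) ℝ), g1 aa = f (aa, 0, 0) := fun aa => rfl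
  have hg2 : ∀ bb : (Matrix (Fin m) (Fin n) ℝ), g2 bb = f (0, bb, 0) := fun bb => rfl
  have hdecomp : ∀ (aa : (Matrix (Fin p) (Fin q) ℝ)) (bb : (Matrix (Fin m) (Fin n) ℝ)) (t : ℝ),
      f (aa, bb, t) = g1 aa + g2 bb + t * f (0, 0, 1) := by
    intro aa bb t
    rw [hg1, hg2]
    have h1 : ((aa, bb, t) : (Matrix (Fin p) (Fin q) ℝ) × (Matrix (Fin m) (Fin n) ℝ) × ℝ) = (aa, 0, 0) + (0, bb, 0) + (0, 0, t) := by
      simp [Prod.ext_iff]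
    have h2 : ((0, 0, t) : (Matrix (Fin p) (Fin q) ℝ) × (Matrix (Fin m) (Fin n) ℝ) × ℝ) = t • ((0, 0, 1) : (Matrix (Fin p) (Fin q) ℝ) × (Matrix (Fin m) (Fin n) ℝ) × ℝ) := by
      simp [Prod.ext_iff]
    rw [h1, map_add, map_add, h2, f.map_smul, smul_eq_mul]
  have hfc : f (0, 0, F (H Xs) + G (L Xs)) = (F (H Xs) + G (L Xs)) * f (0, 0, 1) := by
    rw [hdecomp]
    simp
  -- κ < 0
  have hκneg : f (0, 0, 1) < 0 := by
    have hin : ((0, 0, F (H Xs) + G (L Xs) + 1) : (Matrix (Fin p) (Fin q) ℝ) × (Matrix (Fin m) (Fin n) ℝ) × ℝ) ∈ S := by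
      have h1 := hmem Xs (H Xs) (L Xs) (F (H Xs) + G (L Xs) + 1) (by
        simp only [sub_self, fnorm_zero]
        norm_num)
      simpa [sub_self] using h1
    have h2 := hf _ hin
    rw [hdecomp, hfc] at h2
    simp only [map_zero] at h2
    nlinarith [h2]
  -- representing matrices
  set Zt1 : (Matrix (Fin p) (Fin q) ℝ) := Matrix.of fun i j => g1 (Matrix.single i j 1) with hZt1
  set Zt2 : (Matrix (Fin m) (Fin n) ℝ) := Matrix.of fun i j => g2 (Matrix.single i j 1) with hZt2
  have hrep1 : ∀ aa : (Matrix (Fin p) (Fin q) ℝ), g1 aa = fip aa Zt1 := fun aa => clm_repr g1 aa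
  have hrep2 : ∀ bb : (Matrix (Fin m) (Fin n) ℝ), g2 bb = fip bb Zt2 := fun bb => clm_repr g2 bb
  set κ := f (0, 0, 1) with hκdef
  refine ⟨H Xs, L Xs, κ⁻¹ • Zt1, κ⁻¹ • Zt2, ?_⟩
  have hbase : ∀ (Z : (Matrix (Fin p) (Fin q) ℝ)) (W' : (Matrix (Fin m) (Fin n) ℝ)),
      lag5 H L F G β ρ Xs (H Xs) (L Xs) Z W' = F (H Xs) + G (L Xs) := by
    intro Z W'
    simp [lag5, sub_self, fnorm_zero, fip_zero_left]
  have hkey : ∀ (X R : (Matrix (Fin m) (Fin n) ℝ)) (Y : (Matrix (Fin p) (Fin q) ℝ)),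
      F (H Xs) + G (L Xs) ≤ lag5 H L F G β ρ X R Y (κ⁻¹ • Zt1) (κ⁻¹ • Zt2) := by
    intro X R Y
    have hstep : ∀ t : ℝ,
        F R + G Y + β / 2 * (fnorm (L X - Y)) ^ 2 + ρ / 2 * (fnorm (H X - R)) ^ 2 < t →
        g1 (L X - Y) + g2 (H X - R) + t * κ < (F (H Xs) + G (L Xs)) * κ := by
      intro t ht
      have h2 := hf _ (hmem X R Y t ht)
      rw [hdecomp, hfc] at h2
      exact h2
    have hlim : g1 (L X - Y) + g2 (H X - R)
        + (F R + G Y + β / 2 * (fnorm (L X - Y)) ^ 2 + ρ / 2 * (fnorm (H X - R)) ^ 2) * κ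
        ≤ (F (H Xs) + G (L Xs)) * κ := by
      by_contra hcon
      push_neg at hcon
      set u := g1 (L X - Y) + g2 (H X - R) with hu
      set Ψ := F R + G Y + β / 2 * (fnorm (L X - Y)) ^ 2 + ρ / 2 * (fnorm (H X - R)) ^ 2
        with hΨ
      set cc := F (H Xs) + G (L Xs) with hcc
      have hδpos : 0 < (u + Ψ * κ - cc * κ) / (-κ) :=
        div_pos (by linarith) (by linarith)
      have h3 := hstep (Ψ + (u + Ψ * κ - cc * κ) / (-κ)) (by linarith)
      have h4 : (Ψ + (u + Ψ * κ - cc * κ) / (-κ)) * κ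
          = Ψ * κ - (u + Ψ * κ - cc * κ) := by
        have hκne : κ ≠ 0 := ne_of_lt hκneg
        have hκne' : -κ ≠ 0 := by simpa using hκne
        have e : (u + Ψ * κ - cc * κ) / -κ * κ = -(u + Ψ * κ - cc * κ) := by
          calc (u + Ψ * κ - cc * κ) / -κ * κ
              = -((u + Ψ * κ - cc * κ) / -κ * -κ) := by ring
            _ = -(u + Ψ * κ - cc * κ) := by rw [div_mul_cancel₀ _ hκne']
        rw [add_mul, e]
        ring
      rw [h4] at h3
      linarith
    have hfinal := div_step hκneg hlim
    simp only [lag5]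
    rw [fip_smul_right, fip_smul_right, ← hrep1, ← hrep2]
    linarith [hfinal]
  intro X R Y Z W'
  constructor
  · rw [hbase Z W', hbase (κ⁻¹ • Zt1) (κ⁻¹ • Zt2)]
  · rw [hbase _ _]
    exact hkey X R Y

end Top

lemma backward {m n p q : ℕ}
    (H : Matrix (Fin m) (Fin n) ℝ →ₗ[ℝ] Matrix (Fin m) (Fin n) ℝ)
    (L : Matrix (Fin m) (Fin n) ℝ →ₗ[ℝ] Matrix (Fin p) (Fin q) ℝ)
    (F : Matrix (Fin m) (Fin n) ℝ → ℝ) (G : Matrix (Fin p) (Fin q) ℝ → ℝ)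
    (β ρ : ℝ)
    (Xs Rs : Matrix (Fin m) (Fin n) ℝ) (Ys Zs : Matrix (Fin p) (Fin q) ℝ)
    (Ws : Matrix (Fin m) (Fin n) ℝ)
    (hsad : IsSaddle5 (lag5 H L F G β ρ) Xs Rs Ys Zs Ws) :
    ∀ X, F (H Xs) + G (L Xs) ≤ F (H X) + G (L X) := by
  have key : fip (L Xs - Ys) (L Xs - Ys) = 0 ∧ fip (H Xs - Rs) (H Xs - Rs) = 0 := by
    by_contra hne
    have hn1 := fip_self_nonneg (L Xs - Ys)
    have hn2 := fip_self_nonneg (H Xs - Rs)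
    have hspos : 0 < fip (L Xs - Ys) (L Xs - Ys) + fip (H Xs - Rs) (H Xs - Rs) := by
      rcases lt_or_eq_of_le (by linarith : (0:ℝ) ≤ fip (L Xs - Ys) (L Xs - Ys)
          + fip (H Xs - Rs) (H Xs - Rs)) with h | h
      · exact h
      · exfalso
        exact hne ⟨by linarith, by linarith⟩
    have hC : ∀ t : ℝ, F Rs + G Ys + β / 2 * (fnorm (L Xs - Ys)) ^ 2
        + t * fip (L Xs - Ys) (L Xs - Ys) + ρ / 2 * (fnorm (H Xs - Rs)) ^ 2
        + t * fip (H Xs - Rs) (H Xs - Rs) ≤ lag5 H L F G β ρ Xs Rs Ys Zs Ws := by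
      intro t
      have h := (hsad Xs Rs Ys (t • (L Xs - Ys)) (t • (H Xs - Rs))).1
      simpa only [lag5, fip_smul_right] using h
    have h2 := hC ((lag5 H L F G β ρ Xs Rs Ys Zs Ws
      - (F Rs + G Ys + β / 2 * (fnorm (L Xs - Ys)) ^ 2
        + ρ / 2 * (fnorm (H Xs - Rs)) ^ 2) + 1)
      / (fip (L Xs - Ys) (L Xs - Ys) + fip (H Xs - Rs) (H Xs - Rs)))
    have e := div_mul_cancel₀ (lag5 H L F G β ρ Xs Rs Ys Zs Ws
      - (F Rs + G Ys + β / 2 * (fnorm (L Xs - Ys)) ^ 2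
        + ρ / 2 * (fnorm (H Xs - Rs)) ^ 2) + 1) (ne_of_gt hspos)
    linarith [h2, e]
  obtain ⟨k1, k2⟩ := key
  have hY : Ys = L Xs := (sub_eq_zero.mp (eq_zero_of_fip_self k1)).symm
  have hR : Rs = H Xs := (sub_eq_zero.mp (eq_zero_of_fip_self k2)).symm
  subst hY
  subst hR
  intro X
  have h2 := (hsad X (H X) (L X) Zs Ws).2
  simpa [lag5, sub_self, fnorm_zero, fip_zero_left] using h2

end Stmt12Aux

theorem stmt12 {m n p q : ℕ}
    (H : Matrix (Fin m) (Fin n) ℝ →ₗ[ℝ] Matrix (Fin m) (Fin n) ℝ)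
    (L : Matrix (Fin m) (Fin n) ℝ →ₗ[ℝ] Matrix (Fin p) (Fin q) ℝ)
    (B : Matrix (Fin m) (Fin n) ℝ)
    (F : Matrix (Fin m) (Fin n) ℝ → ℝ)
    (hFdef : ∀ R, F R = ∑ i, ∑ j, |R i j - B i j|)
    (G : Matrix (Fin p) (Fin q) ℝ → ℝ) (hG : ConvexOn ℝ Set.univ G)
    (β ρ : ℝ) (hβ : 0 < β) (hρ : 0 < ρ)
    (Xs : Matrix (Fin m) (Fin n) ℝ) :
    (∀ X, F (H Xs) + G (L Xs) ≤ F (H X) + G (L X)) ↔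
    ∃ (Rs : Matrix (Fin m) (Fin n) ℝ) (Ys Zs : Matrix (Fin p) (Fin q) ℝ)
      (Ws : Matrix (Fin m) (Fin n) ℝ),
      IsSaddle5 (lag5 H L F G β ρ) Xs Rs Ys Zs Ws := by
  constructor
  · intro hmin
    exact Stmt12Aux.forward H L B F hFdef G hG β ρ hβ hρ Xs hmin
  · rintro ⟨Rs, Ys, Zs, Ws, hsad⟩
    exact Stmt12Aux.backward H L F G β ρ Xs Rs Ys Zs Ws hsad
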